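/- Let R be of type E_6 and set v_2 := s_2 s_4 s_5 s_3 s_6 s_4 s_1 s_3 s_5 s_4 s_2 ∈ W. Then: (1) v_2 is the unique element of minimal length in W with v_2^{-1}(α_0) = −α_2, and v_2^{-1} = v_2; (2) v_2(α_1) = α_5, v_2(α_3) = α_6, v_2(α_4) = α_2 + α_3 + 2α_4 + α_5, and v_2(ω_2 − α_2) = ω_2 − α_2. -/

import Mathlib

noncomputable section

open scoped Classical

local notation "⟪" x ", " y "⟫" => @inner ℝ _ _ x y

namespace PaperFormal

variable (V : Type*) [NormedAddCommGroup V] [InnerProductSpace ℝ V] [FiniteDimensional ℝ V]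

/-- The reflection of the Euclidean space `V` in the hyperplane orthogonal to `v`,
i.e. `β ↦ β - (2⟪β,v⟫/⟪v,v⟫) v`. -/
def sref (v : V) : V ≃ₗᵢ[ℝ] V := Submodule.reflection (ℝ ∙ v)ᗮ

/-- A reduced irreducible crystallographic root system `R` in the Euclidean space `V`,
together with a fixed base of simple roots `a 1, …, a n`. -/
structure RootSystemWithBase (n : ℕ) : Type _ where
  /-- the set of roots -/
  R : Set V
  /-- the simple roots `a 1, …, a n` (values outside `{1, …, n}` are irrelevant) -/
  a : ℕ → V
  finite : R.Finite
  ne_zero : ∀ β ∈ R, β ≠ 0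
  refl_mem : ∀ α ∈ R, ∀ β ∈ R, sref V α β ∈ R
  crystallographic : ∀ α ∈ R, ∀ β ∈ R, ∃ k : ℤ, 2 * ⟪β, α⟫ / ⟪α, α⟫ = (k : ℝ)
  reduced : ∀ α ∈ R, ∀ t : ℝ, t • α ∈ R → t = 1 ∨ t = -1
  irreducible : ∀ P : Set V, (∀ x ∈ R, ∀ y ∈ R, x ∈ P → ⟪x, y⟫ ≠ 0 → y ∈ P) →
      (R ∩ P).Nonempty → R ⊆ P
  simple_mem : ∀ i ∈ Finset.Icc 1 n, a i ∈ R
  indep : LinearIndependent ℝ (fun i : (Set.Icc 1 n : Set ℕ) => a i)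
  span_top : Submodule.span ℝ (a '' Set.Icc 1 n) = ⊤
  root_combo : ∀ β ∈ R, ∃ c : ℕ → ℤ, ((∀ i, 0 ≤ c i) ∨ (∀ i, c i ≤ 0)) ∧
      β = ∑ i ∈ Finset.Icc 1 n, (c i : ℝ) • a i

namespace RootSystemWithBase

variable {V} {n : ℕ} (S : RootSystemWithBase V n)

/-- The simple reflection `s i` associated to the simple root `a i`. -/
def s (i : ℕ) : V ≃ₗᵢ[ℝ] V := sref V (S.a i)

/-- The product of the simple reflections along a list of indices
(leftmost factor acting last). -/
def prodW (l : List ℕ) : V ≃ₗᵢ[ℝ] V := (l.map S.s).prod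

/-- The parabolic subgroup `W_J` of the Weyl group generated by the simple reflections
`s i` for `i ∈ J`. -/
def WJ (J : Set ℕ) : Subgroup (V ≃ₗᵢ[ℝ] V) :=
  Subgroup.closure (S.s '' (J ∩ Set.Icc 1 n))

/-- The Weyl group `W`, generated by all simple reflections. -/
def W : Subgroup (V ≃ₗᵢ[ℝ] V) := S.WJ Set.univ

/-- The length of `w` with respect to the simple reflections indexed by `J`:
the least length of a word in these reflections expressing `w`. -/
def lenJ (J : Set ℕ) (w : V ≃ₗᵢ[ℝ] V) : ℕ :=
  sInf {k | ∃ l : List ℕ, (∀ i ∈ l, i ∈ J ∩ Set.Icc 1 n) ∧ l.length = k ∧ w = S.prodW l}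

/-- The length function `ℓ` of the Weyl group. -/
def len (w : V ≃ₗᵢ[ℝ] V) : ℕ := S.lenJ Set.univ w

/-- `w` is the longest element `w_{0,J}` of the parabolic subgroup `W_J`. -/
def IsLongest (J : Set ℕ) (w : V ≃ₗᵢ[ℝ] V) : Prop :=
  w ∈ S.WJ J ∧ ∀ x ∈ S.WJ J, S.lenJ J x ≤ S.lenJ J w

/-- `β` is a positive root (with respect to the base `a`). -/
def IsPos (β : V) : Prop :=
  β ∈ S.R ∧ ∃ c : ℕ → ℝ, (∀ i, 0 ≤ c i) ∧ β = ∑ i ∈ Finset.Icc 1 n, c i • S.a i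

/-- `β` is a negative root. -/
def IsNeg (β : V) : Prop := S.IsPos (-β)

/-- `h` is the highest root `α_0`: a root such that `h - β` is a nonnegative combination of
the simple roots for every root `β`. -/
def IsHighest (h : V) : Prop :=
  h ∈ S.R ∧ ∀ β ∈ S.R, ∃ c : ℕ → ℝ, (∀ i, 0 ≤ c i) ∧
    h - β = ∑ i ∈ Finset.Icc 1 n, c i • S.a i

/-- The root system is simply laced: all roots have the same length. -/
def SimplyLaced : Prop := ∀ α ∈ S.R, ∀ β ∈ S.R, ⟪α, α⟫ = ⟪β, β⟫

/-- `ω` is the fundamental weight `ω_r` dual to the simple root `a r`: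
`⟨ω, a j⟩ = δ_{rj}` for `1 ≤ j ≤ n`. -/
def IsFundamental (r : ℕ) (ω : V) : Prop :=
  ∀ j ∈ Finset.Icc 1 n, 2 * ⟪ω, S.a j⟫ / ⟪S.a j, S.a j⟫ = if j = r then 1 else 0

/-- A weight `ω` is minuscule: `⟨ω, β⟩ ≤ 1` for every positive root `β`. -/
def Minuscule (ω : V) : Prop := ∀ β, S.IsPos β → 2 * ⟪ω, β⟫ / ⟪β, β⟫ ≤ 1

end RootSystemWithBase

variable {V}

/-- Adjacency in the Dynkin diagram of type `E_n` (`n = 6, 7, 8`, Bourbaki labeling):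
`α_2` is the branch node attached to `α_4`; `α_1, α_3, α_4, …, α_n` form a chain. -/
def adjE (i j : ℕ) : Prop :=
  (i, j) ∈ ([(1,3),(3,4),(2,4),(4,5),(5,6),(6,7),(7,8)] : List (ℕ × ℕ)) ∨
  (j, i) ∈ ([(1,3),(3,4),(2,4),(4,5),(5,6),(6,7),(7,8)] : List (ℕ × ℕ))

/-- The element `v_2 = s_2 s_4 s_5 s_3 s_6 s_4 s_1 s_3 s_5 s_4 s_2` of the Weyl group of `E_6`. -/
def v2E6 (S : RootSystemWithBase V 6) : V ≃ₗᵢ[ℝ] V :=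
  S.prodW [2, 4, 5, 3, 6, 4, 1, 3, 5, 4, 2]

/- ### Integer-level combinatorics for E₆ -/

def CE : Fin 6 → Fin 6 → ℤ :=
  ![![2,0,-1,0,0,0], ![0,2,0,-1,0,0], ![-1,0,2,-1,0,0],
    ![0,-1,-1,2,-1,0], ![0,0,0,-1,2,-1], ![0,0,0,0,-1,2]]

def DZ : Fin 6 → Fin 6 → ℤ :=
  ![![4,3,5,6,4,2],![3,6,6,9,6,3],![5,6,10,12,8,4],![6,9,12,18,12,6],![4,6,8,12,10,5],![2,3,4,6,5,4]]

def ipz (c : Fin 6 → ℤ) (j : Fin 6) : ℤ := ∑ i, c i * CE i j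

def stepZ (j : Fin 6) (c : Fin 6 → ℤ) : Fin 6 → ℤ := fun i => c i - (if i = j then ipz c j else 0)

def actZ : List (Fin 6) → (Fin 6 → ℤ) → Fin 6 → ℤ
  | [], c => c
  | j :: t, c => stepZ j (actZ t c)

def pairZ (c d : Fin 6 → ℤ) : ℤ := ∑ j, ipz c j * d j

def hgtZ (c : Fin 6 → ℤ) : ℤ := ∑ i, c i

def PsiZ (c : Fin 6 → ℤ) : ℤ := if 0 < hgtZ c then 2 * hgtZ c - 1 else 2 * hgtZ c + 1

def eZ (i : Fin 6) : Fin 6 → ℤ := fun k => if k = i then 1 else 0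

def a0z : Fin 6 → ℤ := ![1,2,2,3,2,1]

def v2w : List (Fin 6) := [1,3,4,2,5,3,0,2,4,3,1]

def V2M : Fin 6 → Fin 6 → ℤ :=
  ![![0,0,0,0,1,0], ![-1,-2,-2,-3,-2,-1], ![0,0,0,0,0,1],
    ![0,1,1,2,1,0], ![1,0,0,0,0,0], ![0,0,1,0,0,0]]

def PD : List ((Fin 6 → ℤ) × (Fin 6 → Fin 6 → ℤ)) := [
  (![0,1,0,0,0,0], ![![1,0,0,0,0,0], ![0,1,0,0,0,0], ![0,0,1,0,0,0], ![0,0,0,1,0,0], ![0,0,0,0,1,0], ![0,0,0,0,0,1]]),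
  (![0,-1,0,0,0,0], ![![1,0,0,0,0,0], ![0,-1,0,0,0,0], ![0,0,1,0,0,0], ![0,1,0,1,0,0], ![0,0,0,0,1,0], ![0,0,0,0,0,1]]),
  (![0,-1,0,-1,0,0], ![![1,0,0,0,0,0], ![0,-1,0,-1,0,0], ![0,0,1,1,0,0], ![0,1,0,0,0,0], ![0,0,0,1,1,0], ![0,0,0,0,0,1]]),
  (![0,-1,-1,-1,0,0], ![![1,0,1,0,0,0], ![0,-1,-1,-1,0,0], ![0,0,0,1,0,0], ![0,1,0,0,0,0], ![0,0,1,1,1,0], ![0,0,0,0,0,1]]),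
  (![0,-1,0,-1,-1,0], ![![1,0,0,0,0,0], ![0,-1,0,-1,-1,0], ![0,0,1,1,1,0], ![0,1,0,0,0,0], ![0,0,0,1,0,0], ![0,0,0,0,1,1]]),
  (![-1,-1,-1,-1,0,0], ![![0,0,1,0,0,0], ![-1,-1,-1,-1,0,0], ![0,0,0,1,0,0], ![0,1,0,0,0,0], ![1,0,1,1,1,0], ![0,0,0,0,0,1]]),
  (![0,-1,-1,-1,-1,0], ![![1,0,1,0,0,0], ![0,-1,-1,-1,-1,0], ![0,0,0,1,1,0], ![0,1,0,0,0,0], ![0,0,1,1,0,0], ![0,0,0,0,1,1]]),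
  (![0,-1,0,-1,-1,-1], ![![1,0,0,0,0,0], ![0,-1,0,-1,-1,-1], ![0,0,1,1,1,1], ![0,1,0,0,0,0], ![0,0,0,1,0,0], ![0,0,0,0,1,0]]),
  (![-1,-1,-1,-1,-1,0], ![![0,0,1,0,0,0], ![-1,-1,-1,-1,-1,0], ![0,0,0,1,1,0], ![0,1,0,0,0,0], ![1,0,1,1,0,0], ![0,0,0,0,1,1]]),
  (![0,-1,-1,-2,-1,0], ![![1,0,1,1,0,0], ![0,-1,-1,-2,-1,0], ![0,0,0,0,1,0], ![0,1,0,1,0,0], ![0,0,1,0,0,0], ![0,0,0,1,1,1]]),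
  (![0,-1,-1,-1,-1,-1], ![![1,0,1,0,0,0], ![0,-1,-1,-1,-1,-1], ![0,0,0,1,1,1], ![0,1,0,0,0,0], ![0,0,1,1,0,0], ![0,0,0,0,1,0]]),
  (![-1,-1,-1,-2,-1,0], ![![0,0,1,1,0,0], ![-1,-1,-1,-2,-1,0], ![0,0,0,0,1,0], ![0,1,0,1,0,0], ![1,0,1,0,0,0], ![0,0,0,1,1,1]]),
  (![-1,-1,-1,-1,-1,-1], ![![0,0,1,0,0,0], ![-1,-1,-1,-1,-1,-1], ![0,0,0,1,1,1], ![0,1,0,0,0,0], ![1,0,1,1,0,0], ![0,0,0,0,1,0]]),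
  (![0,-1,-1,-2,-1,-1], ![![1,0,1,1,0,0], ![0,-1,-1,-2,-1,-1], ![0,0,0,0,1,1], ![0,1,0,1,0,0], ![0,0,1,0,0,0], ![0,0,0,1,1,0]]),
  (![-1,-1,-2,-2,-1,0], ![![0,0,0,1,0,0], ![-1,-1,-2,-2,-1,0], ![0,0,0,0,1,0], ![0,1,1,1,0,0], ![1,0,0,0,0,0], ![0,0,1,1,1,1]]),
  (![-1,-1,-1,-2,-1,-1], ![![0,0,1,1,0,0], ![-1,-1,-1,-2,-1,-1], ![0,0,0,0,1,1], ![0,1,0,1,0,0], ![1,0,1,0,0,0], ![0,0,0,1,1,0]]),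
  (![0,-1,-1,-2,-2,-1], ![![1,0,1,1,1,0], ![0,-1,-1,-2,-2,-1], ![0,0,0,0,0,1], ![0,1,0,1,1,0], ![0,0,1,0,0,0], ![0,0,0,1,0,0]]),
  (![-1,-1,-2,-2,-1,-1], ![![0,0,0,1,0,0], ![-1,-1,-2,-2,-1,-1], ![0,0,0,0,1,1], ![0,1,1,1,0,0], ![1,0,0,0,0,0], ![0,0,1,1,1,0]]),
  (![-1,-1,-1,-2,-2,-1], ![![0,0,1,1,1,0], ![-1,-1,-1,-2,-2,-1], ![0,0,0,0,0,1], ![0,1,0,1,1,0], ![1,0,1,0,0,0], ![0,0,0,1,0,0]]),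
  (![-1,-1,-2,-2,-2,-1], ![![0,0,0,1,1,0], ![-1,-1,-2,-2,-2,-1], ![0,0,0,0,0,1], ![0,1,1,1,1,0], ![1,0,0,0,0,0], ![0,0,1,1,0,0]]),
  (![-1,-1,-2,-3,-2,-1], ![![0,0,0,0,1,0], ![-1,-1,-2,-3,-2,-1], ![0,0,0,0,0,1], ![0,1,1,2,1,0], ![1,0,0,0,0,0], ![0,0,1,0,0,0]]),
  (![-1,-2,-2,-3,-2,-1], ![![0,0,0,0,1,0], ![-1,-2,-2,-3,-2,-1], ![0,0,0,0,0,1], ![0,1,1,2,1,0], ![1,0,0,0,0,0], ![0,0,1,0,0,0]])]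

lemma CE_symm : ∀ i j, CE i j = CE j i := by decide
lemma CE_diag : ∀ i, CE i i = 2 := by decide
lemma DZ_CE : ∀ i j, (∑ m, DZ i m * CE m j) = if i = j then 3 else 0 := by decide

lemma pd_closed : ∀ p ∈ PD, ∀ j : Fin 6, PsiZ (stepZ j p.1) = PsiZ p.1 - 2 →
    (stepZ j p.1, fun i => stepZ j (p.2 i)) ∈ PD := by decide

lemma pd_final : ∀ p ∈ PD, p.1 = (fun i => -a0z i) → p.2 = V2M := by decide

lemma pd_start : ((eZ 1, fun i => eZ i) : (Fin 6 → ℤ) × (Fin 6 → Fin 6 → ℤ)) ∈ PD := by decide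

lemma v2_mat : ∀ i, actZ v2w (eZ i) = V2M i := by decide
lemma v2_invol : ∀ i : Fin 6, actZ v2w (actZ v2w (eZ i)) = eZ i := by decide
lemma v2_a0 : actZ v2w a0z = fun i => -(eZ 1 i) := by decide
lemma v2_fix : actZ v2w (fun i => a0z i - eZ 1 i) = fun i => a0z i - eZ 1 i := by decide
lemma v2m3 : V2M 3 = ![0,1,1,2,1,0] := by decide
lemma psi_e2 : PsiZ (eZ 1) = 1 := by decide
lemma psi_nega0 : PsiZ (fun i => -a0z i) = -21 := by decide
lemma ipz_a0 : ∀ i : Fin 6, ipz a0z i = if i = 1 then 1 else 0 := by decide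
lemma hgtZ_eZ (j : Fin 6) : hgtZ (eZ j) = 1 := by revert j; decide
lemma hgtZ_neg_eZ (j : Fin 6) : hgtZ (fun i => -(eZ j i)) = -1 := by revert j; decide

set_option maxRecDepth 100000 in
lemma no_big : ∀ k' : Fin 6 → Fin 3, ∀ q ∈ ([4,6,12] : List ℤ),
    ¬(q * (∑ j, ((k' j : ℤ) - 1) * ∑ m, DZ j m * ((k' m : ℤ) - 1)) = 12 ∧
      ∀ j, (6:ℤ) ∣ q * ∑ m, DZ j m * ((k' m : ℤ) - 1)) := by decide

lemma pairZ_comm (c d : Fin 6 → ℤ) : pairZ c d = pairZ d c := by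
  unfold pairZ ipz
  simp only [Finset.sum_mul]
  rw [Finset.sum_comm]
  refine Finset.sum_congr rfl fun x _ => Finset.sum_congr rfl fun y _ => ?_
  rw [CE_symm x y]; ring

lemma pairZ_eZ_right (c : Fin 6 → ℤ) (j : Fin 6) : pairZ c (eZ j) = ipz c j := by
  unfold pairZ eZ
  simp [mul_ite, Finset.sum_ite_eq']

lemma ipz_eZ (i j : Fin 6) : ipz (eZ i) j = CE i j := by
  unfold ipz eZ
  simp [ite_mul, Finset.sum_ite_eq]

lemma pairZ_eZ_left (c : Fin 6 → ℤ) (i : Fin 6) : pairZ (eZ i) c = ipz c i := by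
  rw [pairZ_comm, pairZ_eZ_right]

lemma hgtZ_stepZ (j : Fin 6) (c : Fin 6 → ℤ) : hgtZ (stepZ j c) = hgtZ c - ipz c j := by
  unfold hgtZ stepZ
  rw [Finset.sum_sub_distrib]
  congr 1
  simp [Finset.sum_ite_eq']

lemma pair_self_even (c : Fin 6 → ℤ) : Even (pairZ c c) := by
  refine ⟨c 0*c 0 + c 1*c 1 + c 2*c 2 + c 3*c 3 + c 4*c 4 + c 5*c 5
    - c 0*c 2 - c 1*c 3 - c 2*c 3 - c 3*c 4 - c 4*c 5, ?_⟩
  simp only [pairZ, ipz, Fin.sum_univ_six]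
  simp only [show CE 0 0 = 2 by decide, show CE 0 1 = 0 by decide, show CE 0 2 = -1 by decide, show CE 0 3 = 0 by decide, show CE 0 4 = 0 by decide, show CE 0 5 = 0 by decide, show CE 1 0 = 0 by decide, show CE 1 1 = 2 by decide, show CE 1 2 = 0 by decide, show CE 1 3 = -1 by decide, show CE 1 4 = 0 by decide, show CE 1 5 = 0 by decide, show CE 2 0 = -1 by decide, show CE 2 1 = 0 by decide, show CE 2 2 = 2 by decide, show CE 2 3 = -1 by decide, show CE 2 4 = 0 by decide, show CE 2 5 = 0 by decide, show CE 3 0 = 0 by decide, show CE 3 1 = -1 by decide, show CE 3 2 = -1 by decide, show CE 3 3 = 2 by decide, show CE 3 4 = -1 by decide, show CE 3 5 = 0 by decide, show CE 4 0 = 0 by decide, show CE 4 1 = 0 by decide, show CE 4 2 = 0 by decide, show CE 4 3 = -1 by decide, show CE 4 4 = 2 by decide, show CE 4 5 = -1 by decide, show CE 5 0 = 0 by decide, show CE 5 1 = 0 by decide, show CE 5 2 = 0 by decide, show CE 5 3 = 0 by decide, show CE 5 4 = -1 by decide, show CE 5 5 = 2 by decide]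
  ring

/- ### Bridging the abstract root system to integer coordinates -/

section Bridge
set_option linter.unusedSectionVars false

variable {V : Type*} [NormedAddCommGroup V] [InnerProductSpace ℝ V] [FiniteDimensional ℝ V]

/-- The simple roots indexed by `Fin 6`. -/
def AV (S : RootSystemWithBase V 6) (i : Fin 6) : V := S.a ((i : ℕ) + 1)

/-- The vector with integer coordinates `c` in the base. -/
def phiZ (S : RootSystemWithBase V 6) (c : Fin 6 → ℤ) : V := ∑ i, (c i : ℝ) • AV S i

variable (S : RootSystemWithBase V 6)

lemma sref_apply' (v x : V) : sref V v x = x - (2 * ⟪x, v⟫ / ⟪v, v⟫) • v := by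
  unfold sref
  rw [Submodule.reflection_apply, Submodule.starProjection_orthogonal_val, Submodule.starProjection_singleton]
  rw [real_inner_comm x v]
  simp only [RCLike.ofReal_real_eq_id, id_eq]
  push_cast [real_inner_self_eq_norm_sq]
  module

lemma AV_mem (i : Fin 6) : AV S i ∈ S.R :=
  S.simple_mem _ (by simp only [Finset.mem_Icc]; omega)

lemma phiZ_eZ (j : Fin 6) : phiZ S (eZ j) = AV S j := by
  unfold phiZ eZ
  simp [apply_ite, ite_smul, Finset.sum_ite_eq']

lemma phiZ_neg (c : Fin 6 → ℤ) : phiZ S (fun i => -(c i)) = -phiZ S c := by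
  unfold phiZ
  rw [← Finset.sum_neg_distrib]
  refine Finset.sum_congr rfl fun i _ => ?_
  push_cast
  rw [neg_smul]

lemma phiZ_sub (c d : Fin 6 → ℤ) : phiZ S (fun i => c i - d i) = phiZ S c - phiZ S d := by
  unfold phiZ
  rw [← Finset.sum_sub_distrib]
  refine Finset.sum_congr rfl fun i _ => ?_
  push_cast
  rw [sub_smul]

variable (hE : ∀ i ∈ Finset.Icc 1 6, ∀ j ∈ Finset.Icc 1 6,
      ⟪S.a i, S.a j⟫ = if i = j then 2 else if adjE i j then -1 else 0)

include hE

lemma hA : ∀ i j : Fin 6, ⟪AV S i, AV S j⟫ = ((CE i j : ℤ) : ℝ) := by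
  intro i j
  have hmem : ∀ m : Fin 6, (m : ℕ) + 1 ∈ Finset.Icc 1 6 := by decide
  have htab : ∀ i j : Fin 6, (((i:ℕ)+1 = (j:ℕ)+1) → CE i j = 2) ∧
      (adjE ((i:ℕ)+1) ((j:ℕ)+1) ↔ CE i j = -1) ∧
      (((i:ℕ)+1 ≠ (j:ℕ)+1) → ¬ adjE ((i:ℕ)+1) ((j:ℕ)+1) → CE i j = 0) := by
    unfold adjE; decide
  have h := hE _ (hmem i) _ (hmem j)
  show ⟪S.a ((i:ℕ)+1), S.a ((j:ℕ)+1)⟫ = _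
  rw [h]
  by_cases hij : (i:ℕ)+1 = (j:ℕ)+1
  · rw [if_pos hij, (htab i j).1 hij]; norm_num
  · rw [if_neg hij]
    by_cases hadj : adjE ((i:ℕ)+1) ((j:ℕ)+1)
    · rw [if_pos hadj, (htab i j).2.1.mp hadj]; norm_num
    · rw [if_neg hadj, (htab i j).2.2 hij hadj]; norm_num

lemma inner_phiZ (c d : Fin 6 → ℤ) : ⟪phiZ S c, phiZ S d⟫ = ((pairZ c d : ℤ) : ℝ) := by
  unfold phiZ pairZ ipz
  rw [sum_inner]
  push_cast
  simp only [Finset.sum_mul]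
  rw [Finset.sum_comm (γ := Fin 6)]
  refine Finset.sum_congr rfl fun i _ => ?_
  rw [inner_sum]
  refine Finset.sum_congr rfl fun j _ => ?_
  rw [real_inner_smul_left, real_inner_smul_right, hA S hE]
  push_cast
  ring

lemma s_act (j : Fin 6) (c : Fin 6 → ℤ) :
    S.s (j.val + 1) (phiZ S c) = phiZ S (stepZ j c) := by
  have hip : ⟪phiZ S c, AV S j⟫ = ((ipz c j : ℤ) : ℝ) := by
    rw [← phiZ_eZ S j, inner_phiZ S hE, pairZ_eZ_right]
  have hAA : ⟪AV S j, AV S j⟫ = (2:ℝ) := by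
    rw [hA S hE, CE_diag]; norm_num
  show sref V (S.a ((j:ℕ)+1)) (phiZ S c) = _
  rw [show S.a ((j:ℕ)+1) = AV S j from rfl]
  rw [sref_apply', hip, hAA]
  rw [show 2 * ((ipz c j : ℤ):ℝ) / 2 = ((ipz c j : ℤ):ℝ) by ring]
  unfold phiZ stepZ
  have : ((ipz c j : ℤ):ℝ) • AV S j = ∑ i, (if i = j then ((ipz c j : ℤ):ℝ) else 0) • AV S i := by
    simp [ite_smul, Finset.sum_ite_eq']
  rw [this, ← Finset.sum_sub_distrib]
  refine Finset.sum_congr rfl fun i _ => ?_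
  rw [← sub_smul]
  congr 1
  push_cast
  split_ifs <;> simp

lemma prodW_act (l : List (Fin 6)) (c : Fin 6 → ℤ) :
    S.prodW (l.map fun j => j.val + 1) (phiZ S c) = phiZ S (actZ l c) := by
  induction l with
  | nil => simp [RootSystemWithBase.prodW, actZ]
  | cons j t ih =>
    show (S.s (j.val + 1) * S.prodW (t.map fun j => j.val + 1)) (phiZ S c) = _
    rw [LinearIsometryEquiv.coe_mul, Function.comp_apply, ih, s_act S hE]
    rfl

end Bridge

section Main

set_option linter.unusedSectionVars false

variable {V : Type*} [NormedAddCommGroup V] [InnerProductSpace ℝ V] [FiniteDimensional ℝ V]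
variable (S : RootSystemWithBase V 6)

lemma AV_indep : LinearIndependent ℝ (AV S) := by
  have h := S.indep
  have hinj : Function.Injective (fun i : Fin 6 => (⟨(i:ℕ)+1, by
      simp only [Set.mem_Icc]; omega⟩ : (Set.Icc 1 6 : Set ℕ))) := by
    intro a b hab
    have : (a:ℕ)+1 = (b:ℕ)+1 := congrArg Subtype.val hab
    exact Fin.ext (by omega)
  exact h.comp _ hinj

lemma phiZ_inj {c d : Fin 6 → ℤ} (h : phiZ S c = phiZ S d) : c = d := by
  have li := AV_indep S
  have h0 : ∑ i, ((c i : ℝ) - (d i : ℝ)) • AV S i = 0 := by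
    have hz : phiZ S c - phiZ S d = 0 := sub_eq_zero.mpr h
    simpa [phiZ, sub_smul, Finset.sum_sub_distrib] using hz
  have hco := Fintype.linearIndependent_iff.mp li (fun i => (c i:ℝ) - d i) h0
  funext i
  have hi : (c i : ℝ) - d i = 0 := by simpa using hco i
  have : (c i : ℝ) = d i := by linarith
  exact_mod_cast this

lemma sum_Icc_six {M : Type*} [AddCommMonoid M] (f : ℕ → M) :
    ∑ i ∈ Finset.Icc 1 6, f i = f 1 + f 2 + f 3 + f 4 + f 5 + f 6 := by
  rw [show (Finset.Icc 1 6 : Finset ℕ) = {1,2,3,4,5,6} from by decide]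
  simp [Finset.sum_insert, Finset.mem_insert]
  abel

lemma root_coords (β : V) (hβ : β ∈ S.R) :
    ∃ c : Fin 6 → ℤ, β = phiZ S c ∧ ((∀ i, 0 ≤ c i) ∨ (∀ i, c i ≤ 0)) := by
  obtain ⟨c, hsgn, hrep⟩ := S.root_combo β hβ
  refine ⟨fun i => c ((i:ℕ)+1), ?_, ?_⟩
  · rw [hrep, sum_Icc_six (fun i => (c i:ℝ) • S.a i)]
    unfold phiZ AV
    rw [Fin.sum_univ_six]
    norm_num [show ((0:Fin 6):ℕ) = 0 from rfl, show ((1:Fin 6):ℕ) = 1 from rfl,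
      show ((2:Fin 6):ℕ) = 2 from rfl, show ((3:Fin 6):ℕ) = 3 from rfl,
      show ((4:Fin 6):ℕ) = 4 from rfl, show ((5:Fin 6):ℕ) = 5 from rfl]
  · rcases hsgn with h|h
    · exact Or.inl fun i => h _
    · exact Or.inr fun i => h _

lemma sign_coords (c : Fin 6 → ℤ) (h : phiZ S c ∈ S.R) :
    (∀ i, 0 ≤ c i) ∨ (∀ i, c i ≤ 0) := by
  obtain ⟨c', h1, h2⟩ := root_coords S (phiZ S c) h
  rwa [← phiZ_inj S h1] at h2

lemma hgt_ne (c : Fin 6 → ℤ) (h : phiZ S c ∈ S.R) : hgtZ c ≠ 0 := by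
  intro h0
  have hx : c 0 + c 1 + c 2 + c 3 + c 4 + c 5 = 0 := by
    simpa [hgtZ, Fin.sum_univ_six] using h0
  have hz : phiZ S c = 0 := by
    unfold phiZ
    rw [Fin.sum_univ_six]
    rcases sign_coords S c h with hs|hs <;>
    · have h0 := hs 0; have h1 := hs 1; have h2 := hs 2; have h3 := hs 3
      have h4 := hs 4; have h5 := hs 5
      rw [show c 0 = 0 by omega, show c 1 = 0 by omega, show c 2 = 0 by omega,
        show c 3 = 0 by omega, show c 4 = 0 by omega, show c 5 = 0 by omega]
      norm_num
  exact S.ne_zero _ h hz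

variable (hE : ∀ i ∈ Finset.Icc 1 6, ∀ j ∈ Finset.Icc 1 6,
      ⟪S.a i, S.a j⟫ = if i = j then 2 else if adjE i j then -1 else 0)

include hE

lemma root_norm_two (c : Fin 6 → ℤ) (hβ : phiZ S c ∈ S.R) : pairZ c c = 2 := by
  have hq : ⟪phiZ S c, phiZ S c⟫ = ((pairZ c c : ℤ) : ℝ) := inner_phiZ S hE c c
  set q := pairZ c c with hqdef
  have hq0 : 0 < q := by
    have hne : phiZ S c ≠ 0 := S.ne_zero _ hβ
    have hnn : ‖phiZ S c‖ ≠ 0 := norm_ne_zero_iff.mpr hne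
    have hpos : (0:ℝ) < ⟪phiZ S c, phiZ S c⟫ := by
      rw [real_inner_self_eq_norm_sq]; positivity
    rw [hq] at hpos; exact_mod_cast hpos
  by_contra hq2ne
  obtain ⟨q2, hq2⟩ := pair_self_even c
  have hcr : ∀ i : Fin 6, ∃ k : ℤ, 2 * ⟪AV S i, phiZ S c⟫ / ⟪phiZ S c, phiZ S c⟫ = (k:ℝ) :=
    fun i => S.crystallographic _ hβ (AV S i) (AV_mem S i)
  choose k hk using hcr
  have hAβ : ∀ i, ⟪AV S i, phiZ S c⟫ = ((ipz c i : ℤ):ℝ) := by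
    intro i; rw [← phiZ_eZ S i, inner_phiZ S hE, pairZ_eZ_left]
  have hk' : ∀ i, 2 * ipz c i = q * k i := by
    intro i
    have h1 := hk i
    rw [hAβ i, hq] at h1
    have hqne : ((q:ℤ):ℝ) ≠ 0 := Int.cast_ne_zero.mpr (ne_of_gt hq0)
    field_simp at h1
    have h2 : (2:ℝ) * ((ipz c i : ℤ):ℝ) = ((q:ℤ):ℝ) * ((k i : ℤ):ℝ) := by linarith
    exact_mod_cast h2
  have hb : ∀ i, (ipz c i)^2 ≤ 2 * q := by
    intro i
    have h0 : (0:ℝ) ≤ ⟪(2:ℝ) • phiZ S c - ((ipz c i:ℤ):ℝ) • AV S i,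
        (2:ℝ) • phiZ S c - ((ipz c i:ℤ):ℝ) • AV S i⟫ := real_inner_self_nonneg
    have hAA : ⟪AV S i, AV S i⟫ = (2:ℝ) := by rw [hA S hE, CE_diag]; norm_num
    have hβA : ⟪phiZ S c, AV S i⟫ = ((ipz c i:ℤ):ℝ) := by
      rw [real_inner_comm]; exact hAβ i
    simp only [inner_sub_left, inner_sub_right, real_inner_smul_left, real_inner_smul_right,
      hq, hAA, hβA, hAβ] at h0
    have hr : ((ipz c i:ℤ):ℝ)^2 ≤ 2*((q:ℤ):ℝ) := by nlinarith
    exact_mod_cast hr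
  have hq4 : 4 ≤ q := by omega
  have hkb : ∀ i, -1 ≤ k i ∧ k i ≤ 1 := by
    intro i
    have h2 : (q * k i)^2 ≤ 8 * q := by
      rw [← hk' i]
      have := hb i
      nlinarith
    have h1 : q * (k i)^2 ≤ 8 := by nlinarith [hq0]
    constructor <;> nlinarith [sq_nonneg (k i - 1), sq_nonneg (k i + 1)]
  have hDk : ∀ j, 6 * c j = q * ∑ m, DZ j m * k m := by
    intro j
    have h1 : ∑ m, DZ j m * (2 * ipz c m) = ∑ m, DZ j m * (q * k m) :=
      Finset.sum_congr rfl fun m _ => by rw [hk' m]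
    have h2 : ∑ m, DZ j m * (2 * ipz c m) = 6 * c j := by
      unfold ipz
      have e1 : ∀ m ∈ Finset.univ (α := Fin 6), DZ j m * (2 * ∑ i, c i * CE i m)
          = ∑ i, 2 * c i * (DZ j m * CE m i) := by
        intro m _
        rw [Finset.mul_sum, Finset.mul_sum]
        exact Finset.sum_congr rfl fun i _ => by rw [CE_symm i m]; ring
      rw [Finset.sum_congr rfl e1, Finset.sum_comm]
      have e2 : ∀ i ∈ Finset.univ (α := Fin 6), ∑ m, 2 * c i * (DZ j m * CE m i)
          = 2 * c i * (if j = i then 3 else 0) := by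
        intro i _
        rw [← Finset.mul_sum, DZ_CE]
      rw [Finset.sum_congr rfl e2]
      simp [mul_ite, Finset.sum_ite_eq]
      ring
    have h3 : ∑ m, DZ j m * (q * k m) = q * ∑ m, DZ j m * k m := by
      rw [Finset.mul_sum]
      exact Finset.sum_congr rfl fun m _ => by ring
    rw [← h2, h1, h3]
  have hsum2 : ∑ j, k j * c j = 2 := by
    have h1 : 2 * pairZ c c = ∑ j, (2 * ipz c j) * c j := by
      unfold pairZ
      rw [Finset.mul_sum]
      exact Finset.sum_congr rfl fun j _ => by ring
    have h2 : ∑ j, (2 * ipz c j) * c j = q * ∑ j, k j * c j := by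
      rw [Finset.mul_sum]
      exact Finset.sum_congr rfl fun j _ => by rw [hk' j]; ring
    have h3 : q * 2 = q * ∑ j, k j * c j := by linarith [h1, h2]
    exact (mul_left_cancel₀ (ne_of_gt hq0) h3).symm
  have ht : q * (∑ j, k j * ∑ m, DZ j m * k m) = 12 := by
    have h1 : ∑ j, k j * (q * ∑ m, DZ j m * k m) = ∑ j, k j * (6 * c j) :=
      Finset.sum_congr rfl fun j _ => by rw [← hDk j]
    have h2 : ∑ j, k j * (q * ∑ m, DZ j m * k m) = q * ∑ j, k j * ∑ m, DZ j m * k m := by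
      rw [Finset.mul_sum]
      exact Finset.sum_congr rfl fun j _ => by ring
    have h3 : ∑ j, k j * (6 * c j) = 6 * ∑ j, k j * c j := by
      rw [Finset.mul_sum]
      exact Finset.sum_congr rfl fun j _ => by ring
    rw [← h2, h1, h3, hsum2]
    norm_num
  have hdvd : ∀ j, (6:ℤ) ∣ q * ∑ m, DZ j m * k m := fun j => ⟨c j, (hDk j).symm⟩
  have hq12 : q ∈ ([4,6,12] : List ℤ) := by
    have ht0 : 0 < (∑ j, k j * ∑ m, DZ j m * k m) := by nlinarith [ht, hq0]
    have hqle : q ≤ 12 := by nlinarith [ht, ht0]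
    simp only [List.mem_cons, List.mem_singleton]
    set T := ∑ j, k j * ∑ m, DZ j m * k m
    interval_cases q <;> omega
  set k' : Fin 6 → Fin 3 := fun i => ⟨(k i + 1).toNat, by have := hkb i; omega⟩ with hk'def
  have hkk : ∀ i, ((k' i : ℕ) : ℤ) - 1 = k i := by
    intro i
    have := hkb i
    simp only [hk'def]
    omega
  refine no_big k' q hq12 ⟨?_, ?_⟩
  · rw [show (∑ j, (((k' j:ℕ):ℤ) - 1) * ∑ m, DZ j m * (((k' m:ℕ):ℤ) - 1))
        = ∑ j, k j * ∑ m, DZ j m * k m from ?_]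
    · exact ht
    · refine Finset.sum_congr rfl fun j _ => ?_
      rw [hkk j]
      congr 1
      exact Finset.sum_congr rfl fun m _ => by rw [hkk m]
  · intro j
    rw [show (∑ m, DZ j m * (((k' m:ℕ):ℤ) - 1)) = ∑ m, DZ j m * k m from
        Finset.sum_congr rfl fun m _ => by rw [hkk m]]
    exact hdvd j

lemma ipz_le (c : Fin 6 → ℤ) (h : phiZ S c ∈ S.R) (j : Fin 6) :
    (-2 ≤ ipz c j ∧ ipz c j ≤ 2) ∧ (ipz c j = 2 → c = eZ j) ∧
      (ipz c j = -2 → c = fun i => -(eZ j i)) := by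
  have h2 : ⟪phiZ S c, phiZ S c⟫ = (2:ℝ) := by
    rw [inner_phiZ S hE, root_norm_two S hE c h]; norm_num
  have hAA : ⟪AV S j, AV S j⟫ = (2:ℝ) := by rw [hA S hE, CE_diag]; norm_num
  have hcA : ⟪phiZ S c, AV S j⟫ = ((ipz c j:ℤ):ℝ) := by
    rw [← phiZ_eZ S j, inner_phiZ S hE, pairZ_eZ_right]
  have hAc : ⟪AV S j, phiZ S c⟫ = ((ipz c j:ℤ):ℝ) := by rw [real_inner_comm]; exact hcA
  have hm : (0:ℝ) ≤ ⟪phiZ S c - AV S j, phiZ S c - AV S j⟫ := real_inner_self_nonneg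
  have hp : (0:ℝ) ≤ ⟪phiZ S c + AV S j, phiZ S c + AV S j⟫ := real_inner_self_nonneg
  simp only [inner_sub_left, inner_sub_right, inner_add_left, inner_add_right,
    h2, hAA, hcA, hAc] at hm hp
  refine ⟨⟨?_, ?_⟩, ?_, ?_⟩
  · have : (-2:ℝ) ≤ ((ipz c j:ℤ):ℝ) := by linarith
    exact_mod_cast this
  · have : ((ipz c j:ℤ):ℝ) ≤ 2 := by linarith
    exact_mod_cast this
  · intro he
    have hz : ⟪phiZ S c - AV S j, phiZ S c - AV S j⟫ = (0:ℝ) := by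
      simp only [inner_sub_left, inner_sub_right, h2, hAA, hcA, hAc]
      rw [he]; norm_num
    have := inner_self_eq_zero.mp hz
    have hce : phiZ S c = phiZ S (eZ j) := by
      rw [phiZ_eZ]; exact sub_eq_zero.mp this
    exact phiZ_inj S hce
  · intro he
    have hz : ⟪phiZ S c + AV S j, phiZ S c + AV S j⟫ = (0:ℝ) := by
      simp only [inner_add_left, inner_add_right, h2, hAA, hcA, hAc]
      rw [he]; norm_num
    have hsum0 := inner_self_eq_zero.mp hz
    have hce : phiZ S c = phiZ S (fun i => -(eZ j i)) := by
      rw [phiZ_neg, phiZ_eZ]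
      linear_combination (norm := abel) hsum0
    exact phiZ_inj S hce

lemma step_root (c : Fin 6 → ℤ) (h : phiZ S c ∈ S.R) (j : Fin 6) :
    phiZ S (stepZ j c) ∈ S.R := by
  rw [← s_act S hE]
  exact S.refl_mem _ (AV_mem S j) _ h

lemma psi_step (c : Fin 6 → ℤ) (h : phiZ S c ∈ S.R) (j : Fin 6) :
    |PsiZ (stepZ j c) - PsiZ c| ≤ 2 := by
  have h2 := step_root S hE c h j
  have h1 := hgt_ne S c h
  have h1' := hgt_ne S (stepZ j c) h2
  have hstep := hgtZ_stepZ j c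
  obtain ⟨⟨hge, hle⟩, h2c, hm2c⟩ := ipz_le S hE c h j
  have hcase : (-1 ≤ ipz c j ∧ ipz c j ≤ 1) ∨ (ipz c j = 2 ∧ hgtZ c = 1)
      ∨ (ipz c j = -2 ∧ hgtZ c = -1) := by
    by_cases he : ipz c j = 2
    · exact Or.inr (Or.inl ⟨he, by rw [h2c he]; exact hgtZ_eZ j⟩)
    · by_cases hme : ipz c j = -2
      · exact Or.inr (Or.inr ⟨hme, by rw [hm2c hme]; exact hgtZ_neg_eZ j⟩)
      · exact Or.inl (by omega)
  rw [abs_le]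
  simp only [PsiZ]
  rcases hcase with ⟨hb1,hb2⟩|⟨hb1,hb2⟩|⟨hb1,hb2⟩ <;> split_ifs <;> constructor <;> omega

lemma act_root (l : List (Fin 6)) (c : Fin 6 → ℤ) (h : phiZ S c ∈ S.R) :
    phiZ S (actZ l c) ∈ S.R := by
  induction l with
  | nil => exact h
  | cons j t ih => exact step_root S hE _ ih j

lemma count (l : List (Fin 6)) (c : Fin 6 → ℤ) (h : phiZ S c ∈ S.R) :
    |PsiZ (actZ l c) - PsiZ c| ≤ 2 * l.length := by
  induction l with
  | nil => simp [actZ]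
  | cons j t ih =>
    have hr := act_root S hE t c h
    have h1 := psi_step S hE (actZ t c) hr j
    have htri : |PsiZ (actZ (j::t) c) - PsiZ c| ≤
        |PsiZ (stepZ j (actZ t c)) - PsiZ (actZ t c)| + |PsiZ (actZ t c) - PsiZ c| :=
      abs_sub_le _ _ _
    have hlen : ((j::t : List (Fin 6)).length : ℤ) = (t.length : ℤ) + 1 := by push_cast [List.length_cons]; ring
    rw [hlen]
    calc |PsiZ (actZ (j::t) c) - PsiZ c| ≤ _ + _ := htri
    _ ≤ 2 + 2 * t.length := add_le_add h1 ih
    _ = 2 * ((t.length : ℤ) + 1) := by ring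

lemma rigid (l : List (Fin 6)) (h : PsiZ (actZ l (eZ 1)) = 1 - 2 * l.length) :
    (actZ l (eZ 1), fun i => actZ l (eZ i)) ∈ PD := by
  induction l with
  | nil => exact pd_start
  | cons j t ih =>
    have hroot : phiZ S (eZ 1) ∈ S.R := by rw [phiZ_eZ]; exact AV_mem S 1
    have hr := act_root S hE t (eZ 1) hroot
    have h1 := psi_step S hE (actZ t (eZ 1)) hr j
    have h2 := count S hE t (eZ 1) hroot
    rw [psi_e2] at h2
    rw [abs_le] at h1 h2
    have hcons : actZ (j::t) (eZ 1) = stepZ j (actZ t (eZ 1)) := rfl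
    rw [hcons] at h
    push_cast [List.length_cons] at h
    have ht : PsiZ (actZ t (eZ 1)) = 1 - 2 * t.length := by omega
    have hstep : PsiZ (stepZ j (actZ t (eZ 1))) = PsiZ (actZ t (eZ 1)) - 2 := by omega
    exact pd_closed _ (ih ht) j hstep

omit hE

lemma eq_on_basis (σ τ : V ≃ₗᵢ[ℝ] V) (h : ∀ i : Fin 6, σ (AV S i) = τ (AV S i)) : σ = τ := by
  refine LinearIsometryEquiv.toLinearEquiv_injective (LinearEquiv.toLinearMap_injective (LinearMap.ext_on S.span_top ?_))
  rintro x ⟨i, hi, rfl⟩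
  simp only [Set.mem_Icc] at hi
  have hx := h ⟨i - 1, by omega⟩
  simpa only [AV, show i - 1 + 1 = i from by omega, LinearEquiv.coe_coe, LinearIsometryEquiv.coe_toLinearEquiv] using hx

lemma prodW_nil : S.prodW [] = 1 := rfl

lemma prodW_cons (i : ℕ) (l : List ℕ) : S.prodW (i :: l) = S.s i * S.prodW l := by
  unfold RootSystemWithBase.prodW
  simp

lemma prodW_append (l1 l2 : List ℕ) : S.prodW (l1 ++ l2) = S.prodW l1 * S.prodW l2 := by
  unfold RootSystemWithBase.prodW
  simp

lemma s_sq (i : ℕ) : S.s i * S.s i = 1 := by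
  refine LinearIsometryEquiv.ext fun x => ?_
  show S.s i (S.s i x) = x
  exact Submodule.reflection_reflection _ x

lemma s_inv (i : ℕ) : (S.s i)⁻¹ = S.s i := inv_eq_of_mul_eq_one_right (s_sq S i)

lemma prodW_reverse (l : List ℕ) : (S.prodW l)⁻¹ = S.prodW l.reverse := by
  induction l with
  | nil => simp [prodW_nil]
  | cons i t ih =>
    rw [prodW_cons, List.reverse_cons, prodW_append, mul_inv_rev, ih, s_inv,
      prodW_cons, prodW_nil, mul_one]

lemma prodW_mem (l : List ℕ) (h : ∀ i ∈ l, 1 ≤ i ∧ i ≤ 6) : S.prodW l ∈ S.W := by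
  induction l with
  | nil => rw [prodW_nil]; exact one_mem _
  | cons i t ih =>
    rw [prodW_cons]
    refine mul_mem ?_ (ih fun x hx => h x (List.mem_cons_of_mem i hx))
    apply Subgroup.subset_closure
    refine ⟨i, ⟨trivial, ?_⟩, rfl⟩
    have := h i (List.mem_cons_self (a := i) (l := t))
    simp only [Set.mem_Icc]
    omega

lemma exists_word (u : V ≃ₗᵢ[ℝ] V) (hu : u ∈ S.W) :
    ∃ l : List ℕ, (∀ i ∈ l, 1 ≤ i ∧ i ≤ 6) ∧ u = S.prodW l := by
  induction hu using Subgroup.closure_induction with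
  | mem x hx =>
    obtain ⟨i, hi, rfl⟩ := hx
    obtain ⟨-, hi2⟩ := hi
    simp only [Set.mem_Icc] at hi2
    exact ⟨[i], by intro x hx; simp at hx; omega, by rw [prodW_cons, prodW_nil, mul_one]⟩
  | one => exact ⟨[], by simp, (prodW_nil S).symm⟩
  | mul x y hx hy ihx ihy =>
    obtain ⟨l1, hl1, rfl⟩ := ihx
    obtain ⟨l2, hl2, rfl⟩ := ihy
    refine ⟨l1 ++ l2, ?_, (prodW_append S l1 l2).symm⟩
    intro i hi
    rcases List.mem_append.mp hi with hmem|hmem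
    · exact hl1 i hmem
    · exact hl2 i hmem
  | inv x hx ihx =>
    obtain ⟨l, hl, rfl⟩ := ihx
    exact ⟨l.reverse, fun i hi => hl i (List.mem_reverse.mp hi), prodW_reverse S l⟩

lemma toFinList (l : List ℕ) (h : ∀ i ∈ l, 1 ≤ i ∧ i ≤ 6) :
    ∃ l' : List (Fin 6), l = l'.map (fun j => j.val + 1) := by
  induction l with
  | nil => exact ⟨[], rfl⟩
  | cons i t ih =>
    obtain ⟨l', hl'⟩ := ih fun x hx => h x (List.mem_cons_of_mem i hx)
    have hi := h i (List.mem_cons_self (a := i) (l := t))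
    refine ⟨⟨i-1, by omega⟩ :: l', ?_⟩
    rw [List.map_cons, ← hl']
    congr 1
    show i = i - 1 + 1
    omega

end Main
set_option maxRecDepth 10000 in
theorem statement10' {V : Type*} [NormedAddCommGroup V] [InnerProductSpace ℝ V]
    [FiniteDimensional ℝ V] (S : RootSystemWithBase V 6)
    (hE : ∀ i ∈ Finset.Icc 1 6, ∀ j ∈ Finset.Icc 1 6,
      ⟪S.a i, S.a j⟫ = if i = j then 2 else if adjE i j then -1 else 0)
    (α0 : V) (hα0 : α0 = S.a 1 + (2 : ℝ) • S.a 2 + (2 : ℝ) • S.a 3 + (3 : ℝ) • S.a 4 + (2 : ℝ) • S.a 5 + S.a 6) :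
    (v2E6 S ∈ S.W ∧ (v2E6 S)⁻¹ α0 = -(S.a 2) ∧
     (∀ u ∈ S.W, u⁻¹ α0 = -(S.a 2) →
        S.len (v2E6 S) ≤ S.len u ∧ (S.len u ≤ S.len (v2E6 S) → u = v2E6 S)) ∧
     (v2E6 S)⁻¹ = v2E6 S) ∧
    (v2E6 S (S.a 1) = S.a 5 ∧ v2E6 S (S.a 3) = S.a 6 ∧
     v2E6 S (S.a 4) = S.a 2 + S.a 3 + (2 : ℝ) • S.a 4 + S.a 5 ∧
     ∀ ω : V, S.IsFundamental 2 ω → v2E6 S (ω - S.a 2) = ω - S.a 2) := by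
  have ha0 : α0 = phiZ S a0z := by
    have h : phiZ S a0z = S.a 1 + (2 : ℝ) • S.a 2 + (2 : ℝ) • S.a 3 + (3 : ℝ) • S.a 4
        + (2 : ℝ) • S.a 5 + S.a 6 := by
      unfold phiZ AV
      rw [Fin.sum_univ_six]
      norm_num [show a0z 0 = 1 from rfl, show a0z 1 = 2 from rfl, show a0z 2 = 2 from rfl,
        show a0z 3 = 3 from rfl, show a0z 4 = 2 from rfl, show a0z 5 = 1 from rfl,
        show ((0:Fin 6):ℕ) = 0 from rfl, show ((1:Fin 6):ℕ) = 1 from rfl,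
        show ((2:Fin 6):ℕ) = 2 from rfl, show ((3:Fin 6):ℕ) = 3 from rfl,
        show ((4:Fin 6):ℕ) = 4 from rfl, show ((5:Fin 6):ℕ) = 5 from rfl]
    rw [hα0, ← h]
  have hv2eq : v2E6 S = S.prodW (v2w.map fun j => j.val + 1) := rfl
  have hbasis : ∀ i : Fin 6, v2E6 S (AV S i) = phiZ S (V2M i) := by
    intro i
    rw [← phiZ_eZ S i, hv2eq, prodW_act S hE, v2_mat i]
  have hsq : v2E6 S * v2E6 S = 1 := by
    refine eq_on_basis S _ _ fun i => ?_
    show v2E6 S (v2E6 S (AV S i)) = (1 : V ≃ₗᵢ[ℝ] V) (AV S i)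
    rw [← phiZ_eZ S i, hv2eq, prodW_act S hE, prodW_act S hE, v2_invol i, phiZ_eZ]
    rfl
  have hinv : (v2E6 S)⁻¹ = v2E6 S := inv_eq_of_mul_eq_one_right hsq
  have hv2a0 : v2E6 S α0 = -(S.a 2) := by
    rw [ha0, hv2eq, prodW_act S hE, v2_a0, phiZ_neg, phiZ_eZ]
    rfl
  have hle11 : S.len (v2E6 S) ≤ 11 := by
    apply Nat.sInf_le
    refine ⟨[2,4,5,3,6,4,1,3,5,4,2], ?_, rfl, rfl⟩
    intro i hi
    refine ⟨trivial, Set.mem_Icc.mpr ?_⟩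
    fin_cases hi <;> omega
  refine ⟨⟨?_, ?_, ?_, hinv⟩, ?_, ?_, ?_, ?_⟩
  · rw [hv2eq]
    apply prodW_mem
    intro i hi
    simp only [List.mem_map] at hi
    obtain ⟨j, -, rfl⟩ := hi
    omega
  · rw [hinv]; exact hv2a0
  · intro u hu hua0
    have hu2 : u (S.a 2) = -(phiZ S a0z) := by
      have h1 : u (u⁻¹ α0) = α0 := by
        rw [show u (u⁻¹ α0) = (u * u⁻¹) α0 from rfl, mul_inv_cancel]
        rfl
      rw [hua0, map_neg] at h1
      rw [← ha0, ← h1, neg_neg]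
    have hactgen : ∀ l' : List (Fin 6), u = S.prodW (l'.map fun j => j.val+1) →
        actZ l' (eZ 1) = fun i => -(a0z i) := by
      intro l' hul
      apply phiZ_inj S
      rw [← prodW_act S hE, ← hul, phiZ_eZ, phiZ_neg]
      exact hu2
    have hword : ∀ l : List ℕ, (∀ i ∈ l, 1 ≤ i ∧ i ≤ 6) → u = S.prodW l → 11 ≤ l.length := by
      intro l hl hul
      obtain ⟨l', rfl⟩ := toFinList l hl
      have hact := hactgen l' hul
      have h2 := count S hE l' (eZ 1) (by rw [phiZ_eZ]; exact AV_mem S 1)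
      rw [hact, psi_nega0, psi_e2, abs_le] at h2
      have h3 := h2.1
      rw [List.length_map]
      omega
    have hlenu : S.len u ∈ {k | ∃ l : List ℕ,
        (∀ i ∈ l, i ∈ Set.univ ∩ Set.Icc 1 6) ∧ l.length = k ∧ u = S.prodW l} := by
      apply Nat.sInf_mem
      obtain ⟨l, hl, rfl⟩ := exists_word S u hu
      exact ⟨l.length, l, fun i hi => ⟨trivial, Set.mem_Icc.mpr (hl i hi)⟩, rfl, rfl⟩
    obtain ⟨l, hl, hlen, hul⟩ := hlenu
    have hl' : ∀ i ∈ l, 1 ≤ i ∧ i ≤ 6 := fun i hi => Set.mem_Icc.mp (hl i hi).2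
    have hge := hword l hl' hul
    constructor
    · omega
    · intro hlenle
      have h11 : l.length = 11 := by omega
      obtain ⟨l', rfl⟩ := toFinList l hl'
      have hact := hactgen l' hul
      have hlen' : l'.length = 11 := by
        rw [List.length_map] at h11; exact h11
      have hpsi : PsiZ (actZ l' (eZ 1)) = 1 - 2 * l'.length := by
        rw [hact, psi_nega0, hlen']
        norm_num
      have hmem := rigid S hE l' hpsi
      have hfinal := pd_final _ hmem (by rw [hact])
      rw [hul]
      refine eq_on_basis S _ _ fun i => ?_
      have lhs : S.prodW (l'.map fun j => j.val+1) (AV S i) = phiZ S (V2M i) := by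
        rw [← phiZ_eZ S i, prodW_act S hE]
        exact congrArg (phiZ S) (congrFun hfinal i)
      rw [lhs]
      exact (hbasis i).symm
  · have h := hbasis 0
    rw [show V2M 0 = eZ 4 from by decide, phiZ_eZ] at h
    exact h
  · have h := hbasis 2
    rw [show V2M 2 = eZ 5 from by decide, phiZ_eZ] at h
    exact h
  · have h := hbasis 3
    have hc : phiZ S (V2M 3) = S.a 2 + S.a 3 + (2:ℝ) • S.a 4 + S.a 5 := by
      unfold phiZ AV
      rw [Fin.sum_univ_six]
      norm_num [show V2M 3 0 = 0 from rfl, show V2M 3 1 = 1 from rfl,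
        show V2M 3 2 = 1 from rfl, show V2M 3 3 = 2 from rfl,
        show V2M 3 4 = 1 from rfl, show V2M 3 5 = 0 from rfl,
        show ((0:Fin 6):ℕ) = 0 from rfl, show ((1:Fin 6):ℕ) = 1 from rfl,
        show ((2:Fin 6):ℕ) = 2 from rfl, show ((3:Fin 6):ℕ) = 3 from rfl,
        show ((4:Fin 6):ℕ) = 4 from rfl, show ((5:Fin 6):ℕ) = 5 from rfl]
    rw [hc] at h
    exact h
  · intro ω hω
    have hperp : ∀ i : Fin 6, ⟪ω - phiZ S a0z, AV S i⟫ = (0:ℝ) := by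
      intro i
      have h1 := hω (i.val+1) (by simp only [Finset.mem_Icc]; omega)
      have hAA : ⟪S.a (i.val+1), S.a (i.val+1)⟫ = (2:ℝ) := by
        have := hA S hE i i
        rw [CE_diag] at this
        push_cast at this
        exact this
      rw [hAA] at h1
      rw [show (2:ℝ)*⟪ω, S.a (i.val+1)⟫/2 = ⟪ω, S.a (i.val+1)⟫ from by ring] at h1
      have h2 : ⟪ω, AV S i⟫ = (if i = 1 then (1:ℝ) else 0) := by
        rw [show (⟪ω, AV S i⟫ : ℝ) = ⟪ω, S.a (i.val+1)⟫ from rfl, h1]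
        by_cases hi : i = (1:Fin 6)
        · subst hi; norm_num
        · have hne : i.val + 1 ≠ 2 := fun hcon => hi (Fin.ext (by omega))
          rw [if_neg hne, if_neg hi]
      have h3 : ⟪phiZ S a0z, AV S i⟫ = (if i = 1 then (1:ℝ) else 0) := by
        rw [← phiZ_eZ S i, inner_phiZ S hE, pairZ_eZ_right, ipz_a0 i]
        split_ifs <;> norm_num
      rw [inner_sub_left, h2, h3, sub_self]
    have hωeq : ω = phiZ S a0z := by
      have hfun : ∀ x ∈ S.a '' Set.Icc 1 6, ⟪ω - phiZ S a0z, x⟫ = (0:ℝ) := by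
        rintro x ⟨i, hi, rfl⟩
        simp only [Set.mem_Icc] at hi
        have hx := hperp ⟨i-1, by omega⟩
        simpa only [AV, show i-1+1 = i from by omega] using hx
      have hspan : ∀ x : V, ⟪ω - phiZ S a0z, x⟫ = (0:ℝ) := by
        intro x
        have hx : x ∈ Submodule.span ℝ (S.a '' Set.Icc 1 6) := by
          rw [S.span_top]; trivial
        induction hx using Submodule.span_induction with
        | mem y hy => exact hfun y hy
        | zero => simp
        | add y z hy hz ihy ihz => rw [inner_add_right, ihy, ihz, add_zero]
        | smul t y hy ihy => rw [real_inner_smul_right, ihy, mul_zero]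
      have h0 : ⟪ω - phiZ S a0z, ω - phiZ S a0z⟫ = (0:ℝ) := hspan _
      have := inner_self_eq_zero.mp h0
      rw [sub_eq_zero] at this
      exact this
    have hsub : ω - S.a 2 = phiZ S (fun i => a0z i - eZ 1 i) := by
      rw [hωeq, phiZ_sub, phiZ_eZ]
      rfl
    rw [hsub, hv2eq, prodW_act S hE, v2_fix, ← hsub]

/-- In type `E_6`, with `v_2 = s_2 s_4 s_5 s_3 s_6 s_4 s_1 s_3 s_5 s_4 s_2`:
(1) `v_2` is the unique element of minimal length in `W` with `v_2⁻¹(α_0) = -α_2`, and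
`v_2⁻¹ = v_2`;
(2) `v_2(α_1) = α_5`, `v_2(α_3) = α_6`, `v_2(α_4) = α_2 + α_3 + 2α_4 + α_5`, and
`v_2(ω_2 - α_2) = ω_2 - α_2`. -/
theorem statement10 (S : RootSystemWithBase V 6)
    (hE : ∀ i ∈ Finset.Icc 1 6, ∀ j ∈ Finset.Icc 1 6,
      ⟪S.a i, S.a j⟫ = if i = j then 2 else if adjE i j then -1 else 0)
    (α0 : V) (hα0 : α0 = S.a 1 + (2 : ℝ) • S.a 2 + (2 : ℝ) • S.a 3 + (3 : ℝ) • S.a 4 + (2 : ℝ) • S.a 5 + S.a 6) :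
    (v2E6 S ∈ S.W ∧ (v2E6 S)⁻¹ α0 = -(S.a 2) ∧
     (∀ u ∈ S.W, u⁻¹ α0 = -(S.a 2) →
        S.len (v2E6 S) ≤ S.len u ∧ (S.len u ≤ S.len (v2E6 S) → u = v2E6 S)) ∧
     (v2E6 S)⁻¹ = v2E6 S) ∧
    (v2E6 S (S.a 1) = S.a 5 ∧ v2E6 S (S.a 3) = S.a 6 ∧
     v2E6 S (S.a 4) = S.a 2 + S.a 3 + (2 : ℝ) • S.a 4 + S.a 5 ∧
     ∀ ω : V, S.IsFundamental 2 ω → v2E6 S (ω - S.a 2) = ω - S.a 2) := by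
  exact statement10' S hE α0 hα0

end PaperFormal
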